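/- arXiv:1807.09554 — 9 statements merged into one kernel-verified Lean document; each statement's English description precedes it below -/
import Mathlib

section
/- Let 𝒞 be a category, T : 𝒞 ⥤ 𝒞 an endofunctor, p : T ⟶ 𝟭 and c : T∘T ⟶ T∘T natural transformations satisfying, for every object N, the tangent-category compatibilities c_N ≫ T(p_N) = p_{TN} and c_N ≫ p_{TN} = T(p_N). Then for every object M and every morphism K : T²M ⟶ TM, the lift K_T := T(c_M) ≫ c_{TM} ≫ T(K) ≫ c_M : T³M ⟶ T²M satisfies K_T ≫ T(p_M) = T(T(p_M)) ≫ K. (Lemma 5.19(i): K_T·T(p) = T²(p)·K.) -/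
open CategoryTheory

/-- Lemma 5.19(i): `K_T ≫ T(p_M) = T²(p_M) ≫ K`. -/
theorem stmt_0 {C : Type*} [Category C] (T : C ⥤ C)
    (p : T ⟶ 𝟭 C) (c : T ⋙ T ⟶ T ⋙ T)
    (hc_p1 : ∀ N : C, c.app N ≫ T.map (p.app N) = p.app (T.obj N))
    (hc_p2 : ∀ N : C, c.app N ≫ p.app (T.obj N) = T.map (p.app N))
    (M : C) (K : T.obj (T.obj M) ⟶ T.obj M) :
    (T.map (c.app M) ≫ c.app (T.obj M) ≫ T.map K ≫ c.app M) ≫ T.map (p.app M)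
      = T.map (T.map (p.app M)) ≫ K := by
  have hp := p.naturality K
  simp only [Functor.id_map] at hp
  simp only [Category.assoc]
  calc T.map (c.app M) ≫ c.app (T.obj M) ≫ T.map K ≫ c.app M ≫ T.map (p.app M)
      = T.map (c.app M) ≫ c.app (T.obj M) ≫ T.map K ≫ p.app (T.obj M) := by
        rw [hc_p1]
    _ = T.map (c.app M) ≫ c.app (T.obj M) ≫ p.app (T.obj (T.obj M)) ≫ K := by
        rw [hp]
    _ = T.map (c.app M) ≫ T.map (p.app (T.obj M)) ≫ K := by
        rw [← Category.assoc (c.app (T.obj M)), hc_p2]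
    _ = T.map (c.app M ≫ p.app (T.obj M)) ≫ K := by rw [T.map_comp, Category.assoc]
    _ = T.map (T.map (p.app M)) ≫ K := by rw [hc_p2]
end

section
/- Let 𝒞 be a category, T : 𝒞 ⥤ 𝒞 an endofunctor, ℓ : T ⟶ T∘T and c : T∘T ⟶ T∘T natural transformations with ℓ_M ≫ c_M = ℓ_M. Let M be an object and K : T²M ⟶ TM a morphism satisfying the linearity equation K ≫ ℓ_M = T(ℓ_M) ≫ c_{TM} ≫ T(K). Then the lift K_T := T(c_M) ≫ c_{TM} ≫ T(K) ≫ c_M satisfies T(ℓ_M) ≫ K_T = K ≫ ℓ_M. (Lemma 5.19(ii): T(ℓ)·K_T = K·ℓ.) -/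
open CategoryTheory

/-- Lemma 5.19(ii): `T(ℓ_M) ≫ K_T = K ≫ ℓ_M`. -/
theorem stmt_1 {C : Type*} [Category C] (T : C ⥤ C)
    (l : T ⟶ T ⋙ T) (c : T ⋙ T ⟶ T ⋙ T)
    (M : C)
    (hlc : l.app M ≫ c.app M = l.app M)
    (K : T.obj (T.obj M) ⟶ T.obj M)
    (hKlin : K ≫ l.app M = T.map (l.app M) ≫ c.app (T.obj M) ≫ T.map K) :
    T.map (l.app M) ≫ (T.map (c.app M) ≫ c.app (T.obj M) ≫ T.map K ≫ c.app M)
      = K ≫ l.app M := by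
  have h1 : T.map (l.app M) ≫ T.map (c.app M) = T.map (l.app M) := by
    rw [← T.map_comp, hlc]
  calc T.map (l.app M) ≫ (T.map (c.app M) ≫ c.app (T.obj M) ≫ T.map K ≫ c.app M)
      = (T.map (l.app M) ≫ c.app (T.obj M) ≫ T.map K) ≫ c.app M := by
        rw [← Category.assoc, h1]; simp
    _ = (K ≫ l.app M) ≫ c.app M := by rw [hKlin]
    _ = K ≫ l.app M := by rw [Category.assoc, hlc]
end

section
/- Let 𝒞 be a category, T : 𝒞 ⥤ 𝒞 an endofunctor, ℓ : T ⟶ T∘T and c : T∘T ⟶ T∘T natural transformations satisfying c_M ≫ c_M = 𝟙, ℓ_M ≫ c_M = ℓ_M, ℓ_{TM} ≫ c_{TM} = ℓ_{TM}, and the coherence T(ℓ_M) ≫ c_{TM} ≫ T(c_M) ≫ c_{TM} = c_M ≫ ℓ_{TM} ≫ c_{TM} (all of which hold in any tangent category). Let K : T²M ⟶ TM be a morphism satisfying ℓ_M ≫ K = 𝟙_{TM}, K ≫ ℓ_M = ℓ_{TM} ≫ T(K), and K ≫ ℓ_M = T(ℓ_M) ≫ c_{TM} ≫ T(K) (the retraction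 and linearity properties of a vertical connection). Then the following are equivalent: (i) K is flat and torsion-free, i.e. c_M ≫ K = K and c_{TM} ≫ T(K) ≫ K = T(K) ≫ K; (ii) K_T ≫ K = T(K) ≫ K, where K_T := T(c_M) ≫ c_{TM} ≫ T(K) ≫ c_M is the lift of K. (Theorem 5.20, equivalence (i) ⇔ (ii).) -/
open CategoryTheory

/-- Theorem 5.20, equivalence (i) ⇔ (ii): `K` is flat and torsion-free iff `K_T ≫ K = T(K) ≫ K`. -/
theorem stmt_2 {C : Type*} [Category C] (T : C ⥤ C)
    (l : T ⟶ T ⋙ T) (c : T ⋙ T ⟶ T ⋙ T) (M : C)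
    (hcc : c.app M ≫ c.app M = 𝟙 (T.obj (T.obj M)))
    (hlc : l.app M ≫ c.app M = l.app M)
    (hlcT : l.app (T.obj M) ≫ c.app (T.obj M) = l.app (T.obj M))
    (hcoh : T.map (l.app M) ≫ c.app (T.obj M) ≫ T.map (c.app M) ≫ c.app (T.obj M)
      = c.app M ≫ l.app (T.obj M) ≫ c.app (T.obj M))
    (K : T.obj (T.obj M) ⟶ T.obj M)
    (hretr : l.app M ≫ K = 𝟙 (T.obj M))
    (hlin1 : K ≫ l.app M = l.app (T.obj M) ≫ T.map K)
    (hlin2 : K ≫ l.app M = T.map (l.app M) ≫ c.app (T.obj M) ≫ T.map K) :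
    (c.app M ≫ K = K ∧ c.app (T.obj M) ≫ T.map K ≫ K = T.map K ≫ K)
      ↔ (T.map (c.app M) ≫ c.app (T.obj M) ≫ T.map K ≫ c.app M) ≫ K = T.map K ≫ K := by
  constructor
  · rintro ⟨htf, hflat⟩
    simp only [Category.assoc]
    rw [htf, hflat, ← Category.assoc, ← T.map_comp, htf]
  · intro H
    have H' : T.map (c.app M) ≫ c.app (T.obj M) ≫ T.map K ≫ c.app M ≫ K
        = T.map K ≫ K := by simpa only [Category.assoc] using H
    -- torsion-freeness
    have e1 : T.map (l.app M) ≫ c.app (T.obj M) ≫ T.map (c.app M) ≫ c.app (T.obj M)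
        ≫ T.map K ≫ c.app M ≫ K = c.app M ≫ K := by
      rw [reassoc_of% hcoh, reassoc_of% hlcT, ← reassoc_of% hlin1, reassoc_of% hlc,
        hretr, Category.comp_id]
    have e2 : T.map (l.app M) ≫ c.app (T.obj M) ≫ T.map (c.app M) ≫ c.app (T.obj M)
        ≫ T.map K ≫ c.app M ≫ K = K := by
      rw [H', ← reassoc_of% hlin2, hretr, Category.comp_id]
    have htf : c.app M ≫ K = K := e1.symm.trans e2
    -- flatness
    have e4 : c.app (T.obj M) ≫ T.map K ≫ c.app M ≫ K = T.map (c.app M) ≫ T.map K ≫ K := by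
      have h : T.map (c.app M) ≫ T.map (c.app M) ≫ c.app (T.obj M) ≫ T.map K ≫ c.app M ≫ K
          = T.map (c.app M) ≫ T.map K ≫ K := by rw [H']
      rw [← Category.assoc, ← T.map_comp, hcc] at h
      simpa using h
    have e3 : c.app (T.obj M) ≫ T.map K ≫ c.app M ≫ K = T.map K ≫ K := by
      rw [e4, ← Category.assoc, ← T.map_comp, htf]
    rw [htf] at e3
    exact ⟨htf, e3⟩
end

section
/- Let 𝒞 be a category, T : 𝒞 ⥤ 𝒞 an endofunctor, ℓ : T ⟶ T∘T and c : T∘T ⟶ T∘T natural transformations, M an object, and K : T²M ⟶ TM a morphism. Let K_T := T(c_M) ≫ c_{TM} ≫ T(K) ≫ c_M and K_{T²} := T(c_{TM}) ≫ c_{T²M} ≫ T(K_T) ≫ c_{TM} be the lifts of K and of K_T. Assume: ℓ_M ≫ K = 𝟙_{TM}; K ≫ ℓ_M = ℓ_{TM} ≫ T(K); T(ℓ_M) ≫ K_T = K ≫ ℓ_M; and T(ℓ_{TM}) ≫ K_{T²} = K_T ≫ ℓ_{TM} (the last two being instances of Lemma 5.19(ii)). If T²(K) ≫ K_T = K_{T²}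 ≫ T(K), then K_T ≫ K = T(K) ≫ K. (Theorem 5.20, implication (iii) ⇒ (ii).) -/
open CategoryTheory

/-- Theorem 5.20, implication (iii) ⇒ (ii). -/
theorem stmt_3 {C : Type*} [Category C] (T : C ⥤ C)
    (l : T ⟶ T ⋙ T) (c : T ⋙ T ⟶ T ⋙ T) (M : C)
    (K : T.obj (T.obj M) ⟶ T.obj M)
    -- the lifts of K and of K_T
    (KT : T.obj (T.obj (T.obj M)) ⟶ T.obj (T.obj M))
    (hKT : KT = T.map (c.app M) ≫ c.app (T.obj M) ≫ T.map K ≫ c.app M)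
    (KT2 : T.obj (T.obj (T.obj (T.obj M))) ⟶ T.obj (T.obj (T.obj M)))
    (hKT2 : KT2 = T.map (c.app (T.obj M)) ≫ c.app (T.obj (T.obj M)) ≫ T.map KT ≫ c.app (T.obj M))
    (hretr : l.app M ≫ K = 𝟙 (T.obj M))
    (hlin : K ≫ l.app M = l.app (T.obj M) ≫ T.map K)
    (hKTl : T.map (l.app M) ≫ KT = K ≫ l.app M)
    (hKT2l : T.map (l.app (T.obj M)) ≫ KT2 = KT ≫ l.app (T.obj M))
    (hpres : T.map (T.map K) ≫ KT = KT2 ≫ T.map K) :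
    KT ≫ K = T.map K ≫ K := by
  have key : T.map K ≫ K ≫ l.app M = KT ≫ K ≫ l.app M := by
    have h1 : T.map (l.app (T.obj M)) ≫ T.map (T.map K) ≫ KT
        = KT ≫ l.app (T.obj M) ≫ T.map K := by
      rw [hpres, ← Category.assoc, hKT2l, Category.assoc]
    calc T.map K ≫ K ≫ l.app M
        = T.map K ≫ T.map (l.app M) ≫ KT := by rw [hKTl]
      _ = T.map (K ≫ l.app M) ≫ KT := by rw [T.map_comp, Category.assoc]
      _ = T.map (l.app (T.obj M) ≫ T.map K) ≫ KT := by rw [hlin]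
      _ = T.map (l.app (T.obj M)) ≫ T.map (T.map K) ≫ KT := by
          rw [T.map_comp, Category.assoc]
      _ = KT ≫ l.app (T.obj M) ≫ T.map K := h1
      _ = KT ≫ K ≫ l.app M := by rw [← hlin]
  have := congrArg (fun f => f ≫ K) key
  simpa [Category.assoc, hretr] using this.symm
end

section
/- Let 𝒞 be a category, T : 𝒞 ⥤ 𝒞 an endofunctor, p : T ⟶ 𝟭 and c : T∘T ⟶ T∘T natural transformations, M an object, and K : T²M ⟶ TM a morphism, with lifts K_T := T(c_M) ≫ c_{TM} ≫ T(K) ≫ c_M and K_{T²} := T(c_{TM}) ≫ c_{T²M} ≫ T(K_T) ≫ c_{TM}. Assume: (a) K_T ≫ K = T(K) ≫ K and K_{T²} ≫ K_T = T(K_T) ≫ K_T; (b) K_T ≫ T(p_M) = T²(p_M) ≫ K and K_{T²} ≫ T(p_{TM}) = T²(p_{TM}) ≫ K_T (instances of Lemma 5.19(i)); (c) the bundle equations K ≫ p_M = p_{TM} ≫ p_M, K_T ≫ p_{TM} = p_{T²M} ≫ p_{TM}, and K_{T²} ≫ p_{T²M} = p_{T³M} ≫ p_{T²M}; (d) the three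 morphisms K, T(p_M), p_{TM} : T²M ⟶ TM are jointly monic (as they are when T²M is the fibre product of three copies of p_M : TM ⟶ M with these projections). Then K_{T²} ≫ T(K) = T²(K) ≫ K_T, i.e. K is a connection-preserving map from (T²M, K_{T²}) to (TM, K_T). (Theorem 5.20, implication (i) ⇒ (iii), in the form used in the proof.) -/
open CategoryTheory

/-- Theorem 5.20, implication (i) ⇒ (iii), in the form used in the proof. -/
theorem stmt_4 {C : Type*} [Category C] (T : C ⥤ C)
    (p : T ⟶ 𝟭 C) (c : T ⋙ T ⟶ T ⋙ T) (M : C)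
    (K : T.obj (T.obj M) ⟶ T.obj M)
    (KT : T.obj (T.obj (T.obj M)) ⟶ T.obj (T.obj M))
    (hKT : KT = T.map (c.app M) ≫ c.app (T.obj M) ≫ T.map K ≫ c.app M)
    (KT2 : T.obj (T.obj (T.obj (T.obj M))) ⟶ T.obj (T.obj (T.obj M)))
    (hKT2 : KT2 = T.map (c.app (T.obj M)) ≫ c.app (T.obj (T.obj M)) ≫ T.map KT ≫ c.app (T.obj M))
    -- (a)
    (ha1 : KT ≫ K = T.map K ≫ K)
    (ha2 : KT2 ≫ KT = T.map KT ≫ KT)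
    -- (b) instances of Lemma 5.19(i)
    (hb1 : KT ≫ T.map (p.app M) = T.map (T.map (p.app M)) ≫ K)
    (hb2 : KT2 ≫ T.map (p.app (T.obj M)) = T.map (T.map (p.app (T.obj M))) ≫ KT)
    -- (c) bundle equations
    (hc1 : K ≫ p.app M = p.app (T.obj M) ≫ p.app M)
    (hc2 : KT ≫ p.app (T.obj M) = p.app (T.obj (T.obj M)) ≫ p.app (T.obj M))
    (hc3 : KT2 ≫ p.app (T.obj (T.obj M)) = p.app (T.obj (T.obj (T.obj M))) ≫ p.app (T.obj (T.obj M)))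
    -- (d) joint monicity of K, T(p_M), p_{TM}
    (hd : ∀ (X : C) (u v : X ⟶ T.obj (T.obj M)),
      u ≫ K = v ≫ K → u ≫ T.map (p.app M) = v ≫ T.map (p.app M) →
      u ≫ p.app (T.obj M) = v ≫ p.app (T.obj M) → u = v) :
    KT2 ≫ T.map K = T.map (T.map K) ≫ KT := by
  apply hd
  · calc (KT2 ≫ T.map K) ≫ K = KT2 ≫ (T.map K ≫ K) := by rw [Category.assoc]
      _ = KT2 ≫ (KT ≫ K) := by rw [ha1]
      _ = (KT2 ≫ KT) ≫ K := by rw [Category.assoc]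
      _ = (T.map KT ≫ KT) ≫ K := by rw [ha2]
      _ = T.map KT ≫ (KT ≫ K) := by rw [Category.assoc]
      _ = T.map KT ≫ (T.map K ≫ K) := by rw [ha1]
      _ = (T.map KT ≫ T.map K) ≫ K := by rw [Category.assoc]
      _ = T.map (KT ≫ K) ≫ K := by rw [T.map_comp]
      _ = T.map (T.map K ≫ K) ≫ K := by rw [ha1]
      _ = (T.map (T.map K) ≫ T.map K) ≫ K := by rw [T.map_comp]
      _ = T.map (T.map K) ≫ (T.map K ≫ K) := by rw [Category.assoc]
      _ = T.map (T.map K) ≫ (KT ≫ K) := by rw [ha1]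
      _ = (T.map (T.map K) ≫ KT) ≫ K := by rw [Category.assoc]
  · calc (KT2 ≫ T.map K) ≫ T.map (p.app M)
        = KT2 ≫ T.map (K ≫ p.app M) := by rw [Category.assoc, T.map_comp]
      _ = KT2 ≫ T.map (p.app (T.obj M) ≫ p.app M) := by rw [hc1]
      _ = (KT2 ≫ T.map (p.app (T.obj M))) ≫ T.map (p.app M) := by
            rw [T.map_comp, Category.assoc]
      _ = (T.map (T.map (p.app (T.obj M))) ≫ KT) ≫ T.map (p.app M) := by rw [hb2]
      _ = T.map (T.map (p.app (T.obj M))) ≫ (KT ≫ T.map (p.app M)) := by rw [Category.assoc]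
      _ = T.map (T.map (p.app (T.obj M))) ≫ (T.map (T.map (p.app M)) ≫ K) := by rw [hb1]
      _ = T.map (T.map (p.app (T.obj M) ≫ p.app M)) ≫ K := by
            simp [T.map_comp]
      _ = T.map (T.map (K ≫ p.app M)) ≫ K := by rw [hc1]
      _ = T.map (T.map K ≫ T.map (p.app M)) ≫ K := by rw [T.map_comp]
      _ = (T.map (T.map K) ≫ T.map (T.map (p.app M))) ≫ K := by rw [T.map_comp]
      _ = T.map (T.map K) ≫ (T.map (T.map (p.app M)) ≫ K) := by rw [Category.assoc]
      _ = T.map (T.map K) ≫ (KT ≫ T.map (p.app M)) := by rw [hb1]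
      _ = (T.map (T.map K) ≫ KT) ≫ T.map (p.app M) := by rw [Category.assoc]
  · have hnat : ∀ {X Y : C} (f : X ⟶ Y), T.map f ≫ p.app Y = p.app X ≫ f := by
      intro X Y f; simpa using p.naturality f
    calc (KT2 ≫ T.map K) ≫ p.app (T.obj M)
        = KT2 ≫ (T.map K ≫ p.app (T.obj M)) := by rw [Category.assoc]
      _ = KT2 ≫ (p.app (T.obj (T.obj M)) ≫ K) := by rw [hnat]
      _ = (KT2 ≫ p.app (T.obj (T.obj M))) ≫ K := by rw [Category.assoc]
      _ = (p.app (T.obj (T.obj (T.obj M))) ≫ p.app (T.obj (T.obj M))) ≫ K := by rw [hc3]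
      _ = p.app (T.obj (T.obj (T.obj M))) ≫ (p.app (T.obj (T.obj M)) ≫ K) := by
            rw [Category.assoc]
      _ = p.app (T.obj (T.obj (T.obj M))) ≫ (T.map K ≫ p.app (T.obj M)) := by rw [hnat]
      _ = (p.app (T.obj (T.obj (T.obj M))) ≫ T.map K) ≫ p.app (T.obj M) := by
            rw [Category.assoc]
      _ = (T.map (T.map K) ≫ p.app (T.obj (T.obj M))) ≫ p.app (T.obj M) := by rw [hnat]
      _ = T.map (T.map K) ≫ (p.app (T.obj (T.obj M)) ≫ p.app (T.obj M)) := by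
            rw [Category.assoc]
      _ = T.map (T.map K) ≫ (KT ≫ p.app (T.obj M)) := by rw [hc2]
      _ = (T.map (T.map K) ≫ KT) ≫ p.app (T.obj M) := by rw [Category.assoc]
end

section
/- Let 𝒞 and 𝒟 be categories, T : 𝒞 ⥤ 𝒞 and S : 𝒟 ⥤ 𝒟 endofunctors, F : 𝒞 ⥤ 𝒟 a functor, α a natural isomorphism with components α_N : F(TN) ≅ S(FN), and c : T∘T ⟶ T∘T, c' : S∘S ⟶ S∘S natural transformations satisfying, for every object N of 𝒞, F(c_N) ≫ α^{[2]}_N = α^{[2]}_N ≫ c'_{FN}, where α^{[2]}_N := α_{TN} ≫ S(α_N) : F(T²N) ⟶ S²(FN). Let M be an object of 𝒞, K : T²M ⟶ TM a morphism, and K_F := (α^{[2]}_M)⁻¹ ≫ F(K) ≫ α_M : S²(FM) ⟶ S(FM). Then: (1) if K is torsion-free (c_M ≫ K = K) then K_F is torsion-free (c'_{FM} ≫ K_F = K_F); (2) if K is flat (c_{TM} ≫ T(K) ≫ K = T(K) ≫ K) then K_F is flat (c'_{S(FM)} ≫ S(K_F) ≫ K_F = S(K_F) ≫ K_F). (Proposition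 5.7: a strong morphism of tangent categories preserves torsion-freeness and flatness of connections.) -/
open CategoryTheory

/-- Proposition 5.7: a strong morphism of tangent categories preserves torsion-freeness
and flatness of connections. -/
theorem stmt_5 {C D : Type*} [Category C] [Category D]
    (T : C ⥤ C) (S : D ⥤ D) (F : C ⥤ D)
    (α : T ⋙ F ≅ F ⋙ S)
    (c : T ⋙ T ⟶ T ⋙ T) (c' : S ⋙ S ⟶ S ⋙ S)
    (hflip : ∀ N : C,
      F.map (c.app N) ≫ (α.hom.app (T.obj N) ≫ S.map (α.hom.app N))
        = (α.hom.app (T.obj N) ≫ S.map (α.hom.app N)) ≫ c'.app (F.obj N))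
    (M : C) (K : T.obj (T.obj M) ⟶ T.obj M)
    (KF : S.obj (S.obj (F.obj M)) ⟶ S.obj (F.obj M))
    (hKF : KF = S.map (α.inv.app M) ≫ α.inv.app (T.obj M) ≫ F.map K ≫ α.hom.app M) :
    (c.app M ≫ K = K → c'.app (F.obj M) ≫ KF = KF) ∧
    (c.app (T.obj M) ≫ T.map K ≫ K = T.map K ≫ K →
      c'.app (S.obj (F.obj M)) ≫ S.map KF ≫ KF = S.map KF ≫ KF) := by
  have hc' : ∀ N : C, c'.app (F.obj N) =
      S.map (α.inv.app N) ≫ α.inv.app (T.obj N) ≫ F.map (c.app N)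
        ≫ α.hom.app (T.obj N) ≫ S.map (α.hom.app N) := by
    intro N
    rw [← cancel_epi (α.hom.app (T.obj N) ≫ S.map (α.hom.app N)), ← hflip N]
    simp [← S.map_comp_assoc]
  subst hKF
  constructor
  · intro h1
    rw [hc' M]
    simp only [Category.assoc, Iso.hom_inv_id_app_assoc]
    rw [← S.map_comp_assoc (α.hom.app M) (α.inv.app M), Iso.hom_inv_id_app,
      S.map_id, Category.id_comp, Iso.hom_inv_id_app_assoc, ← F.map_comp_assoc, h1]
  · intro h2
    -- naturality of α.inv at K : S(F K) ≫ α.inv (TM) = α.inv (T²M) ≫ F(TK)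
    have hnat : S.map (F.map K) ≫ α.inv.app (T.obj M)
        = α.inv.app (T.obj (T.obj M)) ≫ F.map (T.map K) := α.inv.naturality K
    -- naturality of c' at α.inv.app M
    have hnatc : c'.app (S.obj (F.obj M)) ≫ S.map (S.map (α.inv.app M))
        = S.map (S.map (α.inv.app M)) ≫ c'.app (F.obj (T.obj M)) :=
      (c'.naturality (α.inv.app M)).symm
    simp only [S.map_comp, Category.assoc]
    rw [← S.map_comp_assoc (α.hom.app M), Iso.hom_inv_id_app, S.map_id, Category.id_comp]
    rw [reassoc_of% hnat]
    rw [reassoc_of% hnatc]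
    rw [hc' (T.obj M)]
    simp only [Category.assoc, Iso.hom_inv_id_app_assoc]
    rw [← S.map_comp_assoc (α.hom.app (T.obj M)), Iso.hom_inv_id_app, S.map_id,
      Category.id_comp]
    rw [Iso.hom_inv_id_app_assoc, ← F.map_comp_assoc,
      ← F.map_comp_assoc (c.app (T.obj M) ≫ T.map K) K, Category.assoc, h2]
    simp [F.map_comp]
end

section
/- Let 𝒞 and 𝒟 be categories, T : 𝒞 ⥤ 𝒞 and S : 𝒟 ⥤ 𝒟 endofunctors, F, G : 𝒞 ⥤ 𝒟 functors equipped with natural isomorphisms α with components α_N : F(TN) ≅ S(FN) and β with components β_N : G(TN) ≅ S(GN), and let φ : F ⟶ G be a natural transformation satisfying the tangent-transformation condition α_N ≫ S(φ_N) = φ_{TN} ≫ β_N for every object N. Then for every object M and every morphism K : T²M ⟶ TM, the component φ_M is connection-preserving from (FM, K_F) to (GM, K_G): K_F ≫ S(φ_M) = S²(φ_M) ≫ K_G, where K_F := (α_{TM} ≫ S(α_M))⁻¹ ≫ F(K) ≫ α_M and K_G := (β_{TM} ≫ S(β_M))⁻¹ ≫ G(K) ≫ β_M. (Lemma 5.10.)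 -/
open CategoryTheory

/-- Lemma 5.10: the component of a tangent transformation at any object with a connection
is connection-preserving between the transported connections. -/
theorem stmt_7 {C D : Type*} [Category C] [Category D]
    (T : C ⥤ C) (S : D ⥤ D) (F G : C ⥤ D)
    (α : T ⋙ F ≅ F ⋙ S) (β : T ⋙ G ≅ G ⋙ S)
    (φ : F ⟶ G)
    (hφ : ∀ N : C, α.hom.app N ≫ S.map (φ.app N) = φ.app (T.obj N) ≫ β.hom.app N)
    (M : C) (K : T.obj (T.obj M) ⟶ T.obj M)
    (KF : S.obj (S.obj (F.obj M)) ⟶ S.obj (F.obj M))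
    (hKF : KF = S.map (α.inv.app M) ≫ α.inv.app (T.obj M) ≫ F.map K ≫ α.hom.app M)
    (KG : S.obj (S.obj (G.obj M)) ⟶ S.obj (G.obj M))
    (hKG : KG = S.map (β.inv.app M) ≫ β.inv.app (T.obj M) ≫ G.map K ≫ β.hom.app M) :
    KF ≫ S.map (φ.app M) = S.map (S.map (φ.app M)) ≫ KG := by
  subst hKF hKG
  have hinv : ∀ N : C, α.inv.app N ≫ φ.app (T.obj N) = S.map (φ.app N) ≫ β.inv.app N := by
    intro N
    calc α.inv.app N ≫ φ.app (T.obj N)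
        = α.inv.app N ≫ (φ.app (T.obj N) ≫ β.hom.app N) ≫ β.inv.app N := by simp
      _ = α.inv.app N ≫ (α.hom.app N ≫ S.map (φ.app N)) ≫ β.inv.app N := by rw [← hφ N]
      _ = S.map (φ.app N) ≫ β.inv.app N := by simp
  have h1 := hinv M
  have h2 := hinv (T.obj M)
  have hnat : F.map K ≫ φ.app (T.obj M) = φ.app (T.obj (T.obj M)) ≫ G.map K := φ.naturality K
  calc (S.map (α.inv.app M) ≫ α.inv.app (T.obj M) ≫ F.map K ≫ α.hom.app M) ≫ S.map (φ.app M)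
      = S.map (α.inv.app M) ≫ α.inv.app (T.obj M) ≫ F.map K ≫ φ.app (T.obj M) ≫ β.hom.app M := by
        simp [hφ M]
    _ = S.map (α.inv.app M) ≫ α.inv.app (T.obj M) ≫ φ.app (T.obj (T.obj M)) ≫ G.map K ≫ β.hom.app M := by
        rw [← Category.assoc (F.map K), hnat, Category.assoc]
    _ = S.map (α.inv.app M) ≫ S.map (φ.app (T.obj M)) ≫ β.inv.app (T.obj M) ≫ G.map K ≫ β.hom.app M := by
        rw [← Category.assoc (α.inv.app (T.obj M)), h2, Category.assoc]
    _ = S.map (S.map (φ.app M)) ≫ S.map (β.inv.app M) ≫ β.inv.app (T.obj M) ≫ G.map K ≫ β.hom.app M := by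
        rw [← Category.assoc, ← S.map_comp, h1, S.map_comp, Category.assoc]
end

section
/- Let 𝒞 and 𝒟 be categories, T : 𝒞 ⥤ 𝒞, S : 𝒟 ⥤ 𝒟, F : 𝒞 ⥤ 𝒟 functors, α a natural isomorphism with components α_N : F(TN) ≅ S(FN), p : T ⟶ 𝟭_𝒞, p' : S ⟶ 𝟭_𝒟, ℓ : T ⟶ T∘T, ℓ' : S ⟶ S∘S natural transformations satisfying, for every object N, α_N ≫ p'_{FN} = F(p_N) and F(ℓ_N) ≫ α^{[2]}_N = α_N ≫ ℓ'_{FN}, where α^{[2]}_N := α_{TN} ≫ S(α_N). Let K : T²M ⟶ TM and K_F := (α^{[2]}_M)⁻¹ ≫ F(K) ≫ α_M. Then: (1) if ℓ_M ≫ K = 𝟙_{TM} then ℓ'_{FM} ≫ K_F = 𝟙_{S(FM)}; (2) if K ≫ p_M = p_{TM} ≫ p_M then K_F ≫ p'_{FM} = p'_{S(FM)} ≫ p'_{FM}. (Part of Proposition 5.5: the transported morphism K_F inherits the retraction and bundle-morphism equations of a vertical connection.) -/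
open CategoryTheory

/-- Part of Proposition 5.5: the transported morphism `K_F` inherits the retraction and
bundle-morphism equations of a vertical connection. -/
theorem stmt_8 {C D : Type*} [Category C] [Category D]
    (T : C ⥤ C) (S : D ⥤ D) (F : C ⥤ D)
    (α : T ⋙ F ≅ F ⋙ S)
    (p : T ⟶ 𝟭 C) (p' : S ⟶ 𝟭 D)
    (l : T ⟶ T ⋙ T) (l' : S ⟶ S ⋙ S)
    (hp : ∀ N : C, α.hom.app N ≫ p'.app (F.obj N) = F.map (p.app N))
    (hl : ∀ N : C,
      F.map (l.app N) ≫ (α.hom.app (T.obj N) ≫ S.map (α.hom.app N))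
        = α.hom.app N ≫ l'.app (F.obj N))
    (M : C) (K : T.obj (T.obj M) ⟶ T.obj M)
    (KF : S.obj (S.obj (F.obj M)) ⟶ S.obj (F.obj M))
    (hKF : KF = S.map (α.inv.app M) ≫ α.inv.app (T.obj M) ≫ F.map K ≫ α.hom.app M) :
    (l.app M ≫ K = 𝟙 (T.obj M) → l'.app (F.obj M) ≫ KF = 𝟙 (S.obj (F.obj M))) ∧
    (K ≫ p.app M = p.app (T.obj M) ≫ p.app M →
      KF ≫ p'.app (F.obj M) = p'.app (S.obj (F.obj M)) ≫ p'.app (F.obj M)) := by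
  subst hKF
  constructor
  · intro h
    have hl' : l'.app (F.obj M)
        = α.inv.app M ≫ F.map (l.app M) ≫ α.hom.app (T.obj M) ≫ S.map (α.hom.app M) := by
      rw [hl M, Iso.inv_hom_id_app_assoc]
    rw [hl']
    simp only [Category.assoc, ← S.map_comp_assoc, Iso.hom_inv_id_app]
    simp [← F.map_comp_assoc, h]
  · intro h
    simp only [Category.assoc]
    rw [hp M, ← F.map_comp, h, F.map_comp, ← hp (T.obj M)]
    simp only [Category.assoc, Iso.inv_hom_id_app_assoc]
    have := p'.naturality (α.inv.app M)
    simp only [Functor.id_map, Functor.comp_obj] at this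
    rw [reassoc_of% this, ← hp M]
    simp only [Category.assoc, Iso.inv_hom_id_app_assoc]
end

section
/- Let 𝒞 and 𝒟 be categories, T : 𝒞 ⥤ 𝒞, S : 𝒟 ⥤ 𝒟, F : 𝒞 ⥤ 𝒟 functors, α a natural isomorphism with components α_N : F(TN) ≅ S(FN), and p : T ⟶ 𝟭_𝒞, p' : S ⟶ 𝟭_𝒟 natural transformations satisfying α_N ≫ p'_{FN} = F(p_N) for all N. Let M be an object of 𝒞 and K : T²M ⟶ TM a morphism such that the three morphisms T(p_M), p_{TM}, K : T²M ⟶ TM present T²M as a fibre product of three copies of p_M : TM ⟶ M, i.e. T(p_M) ≫ p_M = p_{TM} ≫ p_M = K ≫ p_M, and for every object X and morphisms g₁, g₂, g₃ : X ⟶ TM with g₁ ≫ p_M = g₂ ≫ p_M = g₃ ≫ p_M there is a unique h : X ⟶ T²M with h ≫ T(p_M) = g₁, h ≫ p_{TM} = g₂, h ≫ K = g₃. Suppose F preserves this fibre product, i.e. the morphisms F(T(p_M)), F(p_{TM}), F(K) : F(T²M) ⟶ F(TM) present F(T²M) as a fibre product of three copies of F(p_M). Then the morphisms S(p'_{FM}),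 p'_{S(FM)}, K_F : S²(FM) ⟶ S(FM), where K_F := (α_{TM} ≫ S(α_M))⁻¹ ≫ F(K) ≫ α_M, present S²(FM) as a fibre product of three copies of p'_{FM} : S(FM) ⟶ FM in 𝒟. (The fibre-product part of Proposition 5.5: a strong morphism of tangent categories sends connections to connections.) -/
open CategoryTheory

/-- The fibre-product part of Proposition 5.5: a strong morphism of tangent categories
sends connections to connections. -/
theorem stmt_9 {C D : Type*} [Category C] [Category D]
    (T : C ⥤ C) (S : D ⥤ D) (F : C ⥤ D)
    (α : T ⋙ F ≅ F ⋙ S)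
    (p : T ⟶ 𝟭 C) (p' : S ⟶ 𝟭 D)
    (hp : ∀ N : C, α.hom.app N ≫ p'.app (F.obj N) = F.map (p.app N))
    (M : C) (K : T.obj (T.obj M) ⟶ T.obj M)
    -- (T(p_M), p_{TM}, K) presents T²M as a fibre product of three copies of p_M
    (hcone1 : T.map (p.app M) ≫ p.app M = p.app (T.obj M) ≫ p.app M)
    (hcone2 : p.app (T.obj M) ≫ p.app M = K ≫ p.app M)
    (hlim : ∀ (X : C) (g₁ g₂ g₃ : X ⟶ T.obj M),
      g₁ ≫ p.app M = g₂ ≫ p.app M → g₂ ≫ p.app M = g₃ ≫ p.app M →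
      ∃! h : X ⟶ T.obj (T.obj M),
        h ≫ T.map (p.app M) = g₁ ∧ h ≫ p.app (T.obj M) = g₂ ∧ h ≫ K = g₃)
    -- F preserves this fibre product
    (hFlim : ∀ (Y : D) (g₁ g₂ g₃ : Y ⟶ F.obj (T.obj M)),
      g₁ ≫ F.map (p.app M) = g₂ ≫ F.map (p.app M) →
      g₂ ≫ F.map (p.app M) = g₃ ≫ F.map (p.app M) →
      ∃! h : Y ⟶ F.obj (T.obj (T.obj M)),
        h ≫ F.map (T.map (p.app M)) = g₁ ∧ h ≫ F.map (p.app (T.obj M)) = g₂ ∧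
          h ≫ F.map K = g₃)
    (KF : S.obj (S.obj (F.obj M)) ⟶ S.obj (F.obj M))
    (hKF : KF = S.map (α.inv.app M) ≫ α.inv.app (T.obj M) ≫ F.map K ≫ α.hom.app M) :
    -- (S(p'_{FM}), p'_{S(FM)}, K_F) presents S²(FM) as a fibre product
    -- of three copies of p'_{FM}
    (S.map (p'.app (F.obj M)) ≫ p'.app (F.obj M)
        = p'.app (S.obj (F.obj M)) ≫ p'.app (F.obj M)) ∧
    (p'.app (S.obj (F.obj M)) ≫ p'.app (F.obj M) = KF ≫ p'.app (F.obj M)) ∧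
    (∀ (Y : D) (g₁ g₂ g₃ : Y ⟶ S.obj (F.obj M)),
      g₁ ≫ p'.app (F.obj M) = g₂ ≫ p'.app (F.obj M) →
      g₂ ≫ p'.app (F.obj M) = g₃ ≫ p'.app (F.obj M) →
      ∃! h : Y ⟶ S.obj (S.obj (F.obj M)),
        h ≫ S.map (p'.app (F.obj M)) = g₁ ∧ h ≫ p'.app (S.obj (F.obj M)) = g₂ ∧
          h ≫ KF = g₃) := by
  -- β : F(T²M) ⟶ S²(FM), an isomorphism
  set β : F.obj (T.obj (T.obj M)) ⟶ S.obj (S.obj (F.obj M)) :=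
    α.hom.app (T.obj M) ≫ S.map (α.hom.app M) with hβ
  set βinv : S.obj (S.obj (F.obj M)) ⟶ F.obj (T.obj (T.obj M)) :=
    S.map (α.inv.app M) ≫ α.inv.app (T.obj M) with hβinv
  have hβ1 : β ≫ βinv = 𝟙 _ := by
    simp [hβ, hβinv, ← S.map_comp_assoc]
  have hβ2 : βinv ≫ β = 𝟙 _ := by
    simp [hβ, hβinv, ← S.map_comp]
  -- transported projections
  have e1 : β ≫ S.map (p'.app (F.obj M)) = F.map (T.map (p.app M)) ≫ α.hom.app M := by
    rw [hβ, Category.assoc, ← S.map_comp, hp M]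
    exact (α.hom.naturality (p.app M)).symm
  have hnat : S.map (α.hom.app M) ≫ p'.app (S.obj (F.obj M))
      = p'.app (F.obj (T.obj M)) ≫ α.hom.app M := p'.naturality (α.hom.app M)
  have hhi : α.hom.app M ≫ α.inv.app M = 𝟙 (F.obj (T.obj M)) := α.hom_inv_id_app M
  have hih : α.inv.app M ≫ α.hom.app M = 𝟙 (S.obj (F.obj M)) := α.inv_hom_id_app M
  have e2 : β ≫ p'.app (S.obj (F.obj M)) = F.map (p.app (T.obj M)) ≫ α.hom.app M := by
    rw [hβ, Category.assoc, hnat, ← Category.assoc, hp (T.obj M)]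
  have e3 : β ≫ KF = F.map K ≫ α.hom.app M := by
    rw [hβ, hKF]
    simp [← S.map_comp_assoc]
  have hαp : α.hom.app M ≫ p'.app (F.obj M) = F.map (p.app M) := hp M
  have hαp' : α.inv.app M ≫ F.map (p.app M) = p'.app (F.obj M) := by
    simp [← hαp]
  -- cone equalities: compose with βinv (β is iso, so cancel)
  have cancel : ∀ (x y : S.obj (S.obj (F.obj M)) ⟶ F.obj M),
      β ≫ x = β ≫ y → x = y := by
    intro x y hxy
    have := congrArg (βinv ≫ ·) hxy
    simpa [reassoc_of% hβ2] using this
  have c1 : S.map (p'.app (F.obj M)) ≫ p'.app (F.obj M)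
      = p'.app (S.obj (F.obj M)) ≫ p'.app (F.obj M) := by
    apply cancel
    rw [← Category.assoc, e1, ← Category.assoc, e2, Category.assoc, Category.assoc,
      hαp, ← F.map_comp, ← F.map_comp, hcone1]
  have c2 : p'.app (S.obj (F.obj M)) ≫ p'.app (F.obj M) = KF ≫ p'.app (F.obj M) := by
    apply cancel
    rw [← Category.assoc, e2, ← Category.assoc, e3, Category.assoc, Category.assoc,
      hαp, ← F.map_comp, ← F.map_comp, hcone2]
  refine ⟨c1, c2, ?_⟩
  intro Y g₁ g₂ g₃ h12 h23
  have key : ∀ g : Y ⟶ S.obj (F.obj M),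
      (g ≫ α.inv.app M) ≫ F.map (p.app M) = g ≫ p'.app (F.obj M) := by
    intro g; rw [Category.assoc, hαp']
  obtain ⟨h', ⟨h'1, h'2, h'3⟩, h'uniq⟩ :=
    hFlim Y (g₁ ≫ α.inv.app M) (g₂ ≫ α.inv.app M) (g₃ ≫ α.inv.app M)
      (by rw [key, key, h12]) (by rw [key, key, h23])
  refine ⟨h' ≫ β, ⟨?_, ?_, ?_⟩, ?_⟩
  · rw [Category.assoc, e1, ← Category.assoc, h'1, Category.assoc,
      hih, Category.comp_id]
  · rw [Category.assoc, e2, ← Category.assoc, h'2, Category.assoc,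
      hih, Category.comp_id]
  · rw [Category.assoc, e3, ← Category.assoc, h'3, Category.assoc,
      hih, Category.comp_id]
  · intro h ⟨hh1, hh2, hh3⟩
    have f1 : F.map (T.map (p.app M)) = β ≫ S.map (p'.app (F.obj M)) ≫ α.inv.app M := by
      rw [← Category.assoc, e1, Category.assoc, hhi]; simp
    have f2 : F.map (p.app (T.obj M)) = β ≫ p'.app (S.obj (F.obj M)) ≫ α.inv.app M := by
      rw [← Category.assoc, e2, Category.assoc, hhi]; simp
    have f3 : F.map K = β ≫ KF ≫ α.inv.app M := by
      rw [← Category.assoc, e3, Category.assoc, hhi, Category.comp_id]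
    have hβ2' : ∀ {Z : D} (x : S.obj (S.obj (F.obj M)) ⟶ Z),
        βinv ≫ β ≫ x = x := by
      intro Z x; rw [← Category.assoc, hβ2, Category.id_comp]
    have hhb : h ≫ βinv = h' := by
      apply h'uniq
      refine ⟨?_, ?_, ?_⟩
      · rw [f1, Category.assoc, hβ2', ← Category.assoc, hh1]
      · rw [f2, Category.assoc, hβ2', ← Category.assoc, hh2]
      · rw [f3, Category.assoc, hβ2', ← Category.assoc, hh3]
    rw [← hhb, Category.assoc, hβ2, Category.comp_id]
end
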